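/- Let X = ℓ² and let Ω := {x = (x_k) ∈ ℓ² | Σ_{k=1}^∞ |x_k| ≤ 1}. Then the quasi-relative interior of Ω is qri(Ω) = Ω \ {x = (x_k) ∈ ℓ² | Σ_{k=1}^∞ |x_k| = 1 and there exists k₀ ∈ ℕ such that x_k = 0 for all k ≥ k₀}. -/

import Mathlib

open Set Pointwise Filter Topology

/-- The cone generated by a set `A`: `{t • a | t ≥ 0, a ∈ A}`. -/
def coneGen {X : Type*} [AddCommGroup X] [Module ℝ X] (A : Set X) : Set X :=
  {y | ∃ t : ℝ, 0 ≤ t ∧ ∃ a ∈ A, y = t • a}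

/-- A set is a linear subspace if it is the carrier of a submodule. -/
def IsLinSubspace {X : Type*} [AddCommGroup X] [Module ℝ X] (s : Set X) : Prop :=
  ∃ L : Submodule ℝ X, (L : Set X) = s

/-- Intrinsic relative interior. -/
def iri {X : Type*} [AddCommGroup X] [Module ℝ X] (Ω : Set X) : Set X :=
  {x ∈ Ω | IsLinSubspace (coneGen ((fun y => y - x) '' Ω))}

/-- Quasi-relative interior. -/
def qri {X : Type*} [AddCommGroup X] [Module ℝ X] [TopologicalSpace X] (Ω : Set X) : Set X :=
  {x ∈ Ω | IsLinSubspace (closure (coneGen ((fun y => y - x) '' Ω)))}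

/-- Relative interior in a topological vector space. -/
def ri {X : Type*} [AddCommGroup X] [Module ℝ X] [TopologicalSpace X] (Ω : Set X) : Set X :=
  {x ∈ Ω | ∃ V ∈ nhds x, V ∩ closure ((affineSpan ℝ Ω : Set X)) ⊆ Ω}

/-- Normal cone (functional-analytic version), a subset of the topological dual. -/
def normalCone {X : Type*} [AddCommGroup X] [Module ℝ X] [TopologicalSpace X]
    (Ω : Set X) (xb : X) : Set (X →L[ℝ] ℝ) :=
  {f | ∀ x ∈ Ω, f (x - xb) ≤ 0}

open scoped ENNReal NNReal

noncomputable section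

abbrev X2 : Type := lp (fun _ : ℕ => ℝ) 2

-- basic helpers
lemma aux_nnnorm_coe (t : ℝ) : (‖t‖₊ : ℝ≥0∞) = ENNReal.ofReal |t| := by
  exact Real.enorm_eq_ofReal_abs t

lemma aux_sign_mul_self (t : ℝ) : Real.sign t * t = |t| := by
  rcases lt_trichotomy t 0 with h | h | h
  · simp [Real.sign_of_neg h, abs_of_neg h]
  · simp [h]
  · simp [Real.sign_of_pos h, abs_of_pos h]

lemma aux_abs_sign (t : ℝ) : |Real.sign t| ≤ 1 := by
  rcases lt_trichotomy t 0 with h | h | h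
  · simp [Real.sign_of_neg h]
  · simp [h]
  · simp [Real.sign_of_pos h]

lemma aux_abs_sub_sign (t μ : ℝ) (hμ : 0 ≤ μ) (h : μ ≤ |t|) :
    |t - μ * Real.sign t| = |t| - μ := by
  rcases lt_trichotomy t 0 with ht | ht | ht
  · rw [Real.sign_of_neg ht]
    rw [abs_of_neg ht] at h ⊢
    rw [abs_of_nonpos (by linarith)]
    ring
  · subst ht
    simp only [abs_zero] at h ⊢
    have : μ = 0 := le_antisymm h hμ
    simp [this]
  · rw [Real.sign_of_pos ht]
    rw [abs_of_pos ht] at h ⊢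
    rw [abs_of_nonneg (by linarith)]
    ring

lemma aux_coord_sum_single (S : Finset ℕ) (g : ℕ → ℝ) (k : ℕ) :
    (↑(∑ j ∈ S, lp.single 2 j (g j)) : ∀ _ : ℕ, ℝ) k = if k ∈ S then g k else 0 := by
  rw [lp.coeFn_sum, Finset.sum_apply]
  simp only [lp.single_apply]
  rw [Finset.sum_pi_single]

lemma aux_tsum_of_finsupp (d : X2) (N : ℕ) (hd : ∀ k ≥ N, d k = 0) :
    ∑' k, (‖d k‖₊ : ℝ≥0∞) = ENNReal.ofReal (∑ k ∈ Finset.range N, |d k|) := by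
  rw [tsum_eq_sum (s := Finset.range N)
    (fun k hk => by rw [hd k (le_of_not_gt (Finset.mem_range.not.mp hk ∘ id))]; simp)]
  rw [ENNReal.ofReal_sum_of_nonneg (fun k _ => abs_nonneg _)]
  exact Finset.sum_congr rfl fun k _ => aux_nnnorm_coe _

lemma aux_finsum_le (y : X2) (hy : ∑' k, (‖y k‖₊ : ℝ≥0∞) ≤ 1) (N : ℕ) :
    ∑ k ∈ Finset.range N, |y k| ≤ 1 := by
  have h := le_trans (ENNReal.sum_le_tsum (f := fun k => (‖y k‖₊ : ℝ≥0∞)) (Finset.range N)) hy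
  rw [show ∑ k ∈ Finset.range N, (‖y k‖₊ : ℝ≥0∞)
      = ENNReal.ofReal (∑ k ∈ Finset.range N, |y k|) by
    rw [ENNReal.ofReal_sum_of_nonneg (fun k _ => abs_nonneg _)]
    exact Finset.sum_congr rfl fun k _ => aux_nnnorm_coe _] at h
  exact ENNReal.ofReal_le_one.mp h

lemma aux_dense (f : X2) :
    f ∈ closure {g : X2 | ∃ N : ℕ, ∀ k ≥ N, g k = 0} := by
  have h := (lp.hasSum_single (p := 2) (by norm_num) f).tendsto_sum_nat
  refine mem_closure_of_tendsto h (Filter.Eventually.of_forall fun n => ?_)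
  refine ⟨n, fun k hk => ?_⟩
  rw [lp.coeFn_sum, Finset.sum_apply]
  exact Finset.sum_eq_zero fun i hi =>
    lp.single_apply_ne 2 i _ (by simp only [Finset.mem_range] at hi; omega)

lemma aux_mem_cone {x y : X2} {Ω : Set X2} (hy : y ∈ Ω) (t : ℝ) (ht : 0 ≤ t) :
    t • (y - x) ∈ coneGen ((fun y => y - x) '' Ω) :=
  ⟨t, ht, y - x, ⟨y, hy, rfl⟩, rfl⟩


lemma aux_not_qri (x : X2) (h1 : ∑' k, (‖x k‖₊ : ℝ≥0∞) = 1) (k₀ : ℕ)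
    (hk : ∀ k ≥ k₀, x k = 0) :
    ¬ IsLinSubspace (closure (coneGen
      ((fun y => y - x) '' {y : X2 | ∑' k, (‖y k‖₊ : ℝ≥0∞) ≤ 1}))) := by
  rintro ⟨L, hL⟩
  set Ω : Set X2 := {y : X2 | ∑' k, (‖y k‖₊ : ℝ≥0∞) ≤ 1} with hΩ
  set v : X2 := ∑ k ∈ Finset.range k₀, lp.single 2 k (Real.sign (x k)) with hv
  set f : X2 →L[ℝ] ℝ := innerSL ℝ v with hfdef
  have hf : ∀ y : X2, f y = ∑ k ∈ Finset.range k₀, Real.sign (x k) * y k := by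
    intro y
    show (inner ℝ v y : ℝ) = _
    rw [hv, sum_inner]
    refine Finset.sum_congr rfl fun k _ => ?_
    rw [lp.inner_single_left]
    simp [RCLike.inner_apply, mul_comm]
  have hfx : f x = 1 := by
    have hsum : ∑ k ∈ Finset.range k₀, |x k| = 1 := by
      have h2 := (aux_tsum_of_finsupp x k₀ hk).symm.trans h1
      exact ENNReal.ofReal_eq_one.mp h2
    rw [hf]
    calc ∑ k ∈ Finset.range k₀, Real.sign (x k) * x k
        = ∑ k ∈ Finset.range k₀, |x k| :=
          Finset.sum_congr rfl fun k _ => aux_sign_mul_self (x k)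
      _ = 1 := hsum
  have hfle : ∀ y ∈ Ω, f y ≤ 1 := by
    intro y hy
    rw [hf]
    calc ∑ k ∈ Finset.range k₀, Real.sign (x k) * y k
        ≤ ∑ k ∈ Finset.range k₀, |y k| := by
          refine Finset.sum_le_sum fun k _ => ?_
          calc Real.sign (x k) * y k ≤ |Real.sign (x k) * y k| := le_abs_self _
            _ = |Real.sign (x k)| * |y k| := abs_mul _ _
            _ ≤ 1 * |y k| :=
                mul_le_mul_of_nonneg_right (aux_abs_sign _) (abs_nonneg _)
            _ = |y k| := one_mul _
      _ ≤ 1 := aux_finsum_le y hy k₀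
  have hclosed : ∀ z ∈ closure (coneGen ((fun y => y - x) '' Ω)), f z ≤ 0 := by
    intro z hz
    have hsub : coneGen ((fun y => y - x) '' Ω) ⊆ {z : X2 | f z ≤ 0} := by
      rintro _ ⟨t, ht, a, ⟨y, hy, rfl⟩, rfl⟩
      simp only [mem_setOf_eq, map_smul, smul_eq_mul]
      have hneg : f (y - x) ≤ 0 := by
        rw [map_sub, hfx]; linarith [hfle y hy]
      exact mul_nonpos_of_nonneg_of_nonpos ht hneg
    exact closure_minimal hsub (isClosed_le f.continuous continuous_const) hz
  have h0 : (0 : X2) ∈ Ω := by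
    simp only [hΩ, mem_setOf_eq]
    have : ∀ k : ℕ, ((0 : X2) k) = 0 := fun k => by rw [lp.coeFn_zero]; rfl
    simp [this]
  have hmx : -x ∈ coneGen ((fun y => y - x) '' Ω) := by
    have := aux_mem_cone (x := x) h0 1 zero_le_one
    simpa using this
  have hxcl : x ∈ closure (coneGen ((fun y => y - x) '' Ω)) := by
    have hmxL : -x ∈ L := by
      rw [← SetLike.mem_coe, hL]; exact subset_closure hmx
    have hxL : x ∈ L := by simpa using L.neg_mem hmxL
    rw [← SetLike.mem_coe, hL] at hxL
    exact hxL
  have := hclosed x hxcl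
  rw [hfx] at this
  linarith

lemma aux_caseA (x : X2) (hlt : ∑' k, (‖x k‖₊ : ℝ≥0∞) < 1)
    (d : X2) (N : ℕ) (hd : ∀ k ≥ N, d k = 0) :
    d ∈ coneGen ((fun y => y - x) '' {y : X2 | ∑' k, (‖y k‖₊ : ℝ≥0∞) ≤ 1}) := by
  set Ω : Set X2 := {y : X2 | ∑' k, (‖y k‖₊ : ℝ≥0∞) ≤ 1} with hΩ
  have hxΩ : x ∈ Ω := le_of_lt hlt
  set ts := ∑' k, (‖x k‖₊ : ℝ≥0∞) with hts
  set D := ∑' k, (‖d k‖₊ : ℝ≥0∞) with hD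
  have hDfin : D ≠ ⊤ := by
    rw [hD, aux_tsum_of_finsupp d N hd]; exact ENNReal.ofReal_ne_top
  by_cases hDz : D = 0
  · have hdz : d = 0 := by
      apply lp.ext; funext k
      have h0 : (‖d k‖₊ : ℝ≥0∞) = 0 := by
        rw [hD] at hDz
        exact (ENNReal.tsum_eq_zero.mp hDz) k
      simpa using h0
    rw [hdz]
    have := aux_mem_cone (x := x) hxΩ 0 le_rfl
    simpa using this
  · set ε := (1 - ts) / D with hε
    have hεtop : ε ≠ ⊤ := (ENNReal.div_lt_top (by simp) hDz).ne
    have hεpos : 0 < ε := ENNReal.div_pos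
      (by simpa [tsub_eq_zero_iff_le] using hlt.not_ge) hDfin
    set εr := ε.toReal with hεr
    have hεrpos : 0 < εr := ENNReal.toReal_pos hεpos.ne' hεtop
    set y := x + εr • d with hy
    have hyk : ∀ k : ℕ, y k = x k + εr * d k := by
      intro k
      rw [hy, lp.coeFn_add, Pi.add_apply, lp.coeFn_smul, Pi.smul_apply, smul_eq_mul]
    have hyΩ : y ∈ Ω := by
      show ∑' k, (‖y k‖₊ : ℝ≥0∞) ≤ 1
      calc ∑' k, (‖y k‖₊ : ℝ≥0∞)
          ≤ ∑' k, ((‖x k‖₊ : ℝ≥0∞) + ENNReal.ofReal εr * (‖d k‖₊ : ℝ≥0∞)) := by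
            refine ENNReal.tsum_le_tsum fun k => ?_
            rw [hyk k, aux_nnnorm_coe, aux_nnnorm_coe, aux_nnnorm_coe]
            calc ENNReal.ofReal |x k + εr * d k|
                ≤ ENNReal.ofReal (|x k| + εr * |d k|) := by
                  refine ENNReal.ofReal_le_ofReal ?_
                  calc |x k + εr * d k| ≤ |x k| + |εr * d k| := abs_add_le _ _
                    _ = |x k| + εr * |d k| := by
                        rw [abs_mul, abs_of_pos hεrpos]
              _ = ENNReal.ofReal |x k| + ENNReal.ofReal εr * ENNReal.ofReal |d k| := by
                  rw [ENNReal.ofReal_add (abs_nonneg _) (by positivity),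
                    ENNReal.ofReal_mul hεrpos.le]
        _ = ts + ENNReal.ofReal εr * D := by
            rw [ENNReal.tsum_add, ENNReal.tsum_mul_left]
        _ = ts + ε * D := by rw [hεr, ENNReal.ofReal_toReal hεtop]
        _ = ts + (1 - ts) := by rw [hε, ENNReal.div_mul_cancel hDz hDfin]
        _ ≤ 1 := by
            rw [add_comm]
            exact le_of_eq (tsub_add_cancel_of_le hlt.le)
    refine ⟨εr⁻¹, by positivity, y - x, ⟨y, hyΩ, rfl⟩, ?_⟩
    have hyx : y - x = εr • d := by rw [hy]; abel
    rw [hyx, smul_smul, inv_mul_cancel₀ hεrpos.ne', one_smul]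

lemma aux_abs_sign_eq_one {t : ℝ} (ht : t ≠ 0) : |Real.sign t| = 1 := by
  rcases lt_trichotomy t 0 with h | h | h
  · simp [Real.sign_of_neg h]
  · exact absurd h ht
  · simp [Real.sign_of_pos h]

lemma aux_caseB (x : X2) (h1 : ∑' k, (‖x k‖₊ : ℝ≥0∞) = 1)
    (hinf : ∀ n : ℕ, ∃ k, n ≤ k ∧ x k ≠ 0)
    (d : X2) (N : ℕ) (hd : ∀ k ≥ N, d k = 0) :
    d ∈ closure (coneGen
      ((fun y => y - x) '' {y : X2 | ∑' k, (‖y k‖₊ : ℝ≥0∞) ≤ 1})) := by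
  set Ω : Set X2 := {y : X2 | ∑' k, (‖y k‖₊ : ℝ≥0∞) ≤ 1} with hΩ
  have hxΩ : x ∈ Ω := le_of_eq h1
  set c := ∑ k ∈ Finset.range N, |d k| with hc
  have hc0 : 0 ≤ c := Finset.sum_nonneg fun k _ => abs_nonneg _
  by_cases hcz : c = 0
  · have hdz : d = 0 := by
      apply lp.ext; funext k
      by_cases hk : k < N
      · have h0 : |d k| = 0 := le_antisymm (hcz ▸ Finset.single_le_sum
          (f := fun k => |d k|) (fun i _ => abs_nonneg _) (Finset.mem_range.mpr hk))
          (abs_nonneg _)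
        simpa using abs_eq_zero.mp h0
      · simpa using hd k (le_of_not_gt hk)
    rw [hdz]
    refine subset_closure ?_
    have := aux_mem_cone (x := x) hxΩ 0 le_rfl
    simpa using this
  have hcpos : 0 < c := lt_of_le_of_ne hc0 (Ne.symm hcz)
  rw [Metric.mem_closure_iff]
  intro δ hδ
  set M : ℕ := ⌈c ^ 2 / δ ^ 2⌉₊ + 1 with hM
  have hM0 : 0 < M := Nat.succ_pos _
  have hMpos : (0 : ℝ) < M := Nat.cast_pos.mpr hM0
  have hMgt : c ^ 2 / δ ^ 2 < (M : ℝ) := by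
    calc c ^ 2 / δ ^ 2 ≤ (⌈c ^ 2 / δ ^ 2⌉₊ : ℝ) := Nat.le_ceil _
      _ < (M : ℝ) := by exact_mod_cast Nat.lt_succ_self _
  have hT : {k : ℕ | N ≤ k ∧ x k ≠ 0}.Infinite := by
    apply Set.infinite_of_forall_exists_gt
    intro a
    obtain ⟨k, hk1, hk2⟩ := hinf (max N a + 1)
    refine ⟨k, ⟨?_, hk2⟩, ?_⟩
    · omega
    · omega
  obtain ⟨S, hS, hScard⟩ := hT.exists_subset_card_eq M
  have hSne : S.Nonempty := Finset.card_pos.mp (by rw [hScard]; exact hM0)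
  have hSd : ∀ k ∈ S, d k = 0 := fun k hk => hd k (hS hk).1
  have hSx : ∀ k ∈ S, x k ≠ 0 := fun k hk => (hS hk).2
  set μ := S.inf' hSne (fun k => |x k|) with hμ
  have hμpos : 0 < μ := by
    rw [hμ, Finset.lt_inf'_iff]
    exact fun k hk => abs_pos.mpr (hSx k hk)
  have hμle : ∀ k ∈ S, μ ≤ |x k| := fun k hk => Finset.inf'_le _ hk
  set ε := μ * M / c with hε
  have hεpos : 0 < ε := by positivity
  set w : X2 := ∑ k ∈ S, lp.single 2 k (Real.sign (x k)) with hw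
  have hwk : ∀ k : ℕ, w k = if k ∈ S then Real.sign (x k) else 0 := fun k =>
    aux_coord_sum_single S (fun j => Real.sign (x j)) k
  set z := d - (c / M) • w with hz
  have hzk : ∀ k : ℕ, z k = d k - (c / M) * w k := by
    intro k
    rw [hz, lp.coeFn_sub, Pi.sub_apply, lp.coeFn_smul, Pi.smul_apply, smul_eq_mul]
  set y := x + ε • z with hy
  have hyk : ∀ k : ℕ, y k = x k + ε * z k := by
    intro k
    rw [hy, lp.coeFn_add, Pi.add_apply, lp.coeFn_smul, Pi.smul_apply, smul_eq_mul]
  have key : ε * (c / M) = μ := by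
    rw [hε]; field_simp
  have hcoord : ∀ k : ℕ, (‖y k‖₊ : ℝ≥0∞) + (if k ∈ S then ENNReal.ofReal μ else 0)
      ≤ (‖x k‖₊ : ℝ≥0∞) + ENNReal.ofReal ε * (‖d k‖₊ : ℝ≥0∞) := by
    intro k
    by_cases hk : k ∈ S
    · have hyval : y k = x k - μ * Real.sign (x k) := by
        rw [hyk, hzk, hwk, if_pos hk, hSd k hk]
        have : ε * ((0 : ℝ) - c / M * Real.sign (x k))
            = -(ε * (c / M)) * Real.sign (x k) := by ring
        rw [this, key]; ring
      rw [if_pos hk, hyval, aux_nnnorm_coe,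
        aux_abs_sub_sign _ _ hμpos.le (hμle k hk),
        ← ENNReal.ofReal_add (by linarith [hμle k hk, abs_nonneg (x k)]) hμpos.le,
        sub_add_cancel, ← aux_nnnorm_coe]
      exact le_self_add
    · have hyval : y k = x k + ε * d k := by
        rw [hyk, hzk, hwk, if_neg hk]; ring
      rw [if_neg hk, add_zero, hyval, aux_nnnorm_coe, aux_nnnorm_coe, aux_nnnorm_coe]
      calc ENNReal.ofReal |x k + ε * d k|
          ≤ ENNReal.ofReal (|x k| + ε * |d k|) := by
            refine ENNReal.ofReal_le_ofReal ?_
            calc |x k + ε * d k| ≤ |x k| + |ε * d k| := abs_add_le _ _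
              _ = |x k| + ε * |d k| := by rw [abs_mul, abs_of_pos hεpos]
        _ = ENNReal.ofReal |x k| + ENNReal.ofReal ε * ENNReal.ofReal |d k| := by
            rw [ENNReal.ofReal_add (abs_nonneg _) (by positivity),
              ENNReal.ofReal_mul hεpos.le]
  have h2 : ∑' k : ℕ, (if k ∈ S then ENNReal.ofReal μ else 0)
      = ENNReal.ofReal (μ * M) := by
    rw [tsum_eq_sum (s := S) (fun k hk => if_neg hk)]
    rw [Finset.sum_congr rfl (fun k hk => if_pos hk), Finset.sum_const, hScard,
      nsmul_eq_mul, ← ENNReal.ofReal_natCast M,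
      ← ENNReal.ofReal_mul (Nat.cast_nonneg M), mul_comm]
  have hmain := ENNReal.tsum_le_tsum hcoord
  rw [ENNReal.tsum_add, ENNReal.tsum_add, ENNReal.tsum_mul_left, h2, h1,
    aux_tsum_of_finsupp d N hd, ← hc, ← ENNReal.ofReal_mul hεpos.le] at hmain
  have hεc : ε * c = μ * M := by
    rw [hε]; field_simp
  rw [hεc] at hmain
  have hyΩ : y ∈ Ω :=
    (ENNReal.add_le_add_iff_right ENNReal.ofReal_ne_top).mp hmain
  refine ⟨z, ⟨ε⁻¹, by positivity, y - x, ⟨y, hyΩ, rfl⟩, ?_⟩, ?_⟩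
  · have hyx : y - x = ε • z := by rw [hy]; abel
    rw [hyx, smul_smul, inv_mul_cancel₀ hεpos.ne', one_smul]
  · -- distance estimate
    have hdz : d - z = (c / M) • w := by rw [hz]; abel
    have hw2 : ‖w‖ ^ (2 : ℕ) = (M : ℝ) := by
      have h := lp.norm_sum_single (p := 2)
        (by norm_num : (0:ℝ) < (2:ℝ≥0∞).toReal) (fun k => Real.sign (x k)) S
      rw [← hw] at h
      have htr : (2 : ℝ≥0∞).toReal = (2 : ℝ) := by norm_num
      rw [htr] at h
      have hrhs : ∑ i ∈ S, ‖Real.sign (x i)‖ ^ (2 : ℝ) = (M : ℝ) := by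
        rw [Finset.sum_congr rfl (fun i hi => by
          rw [Real.norm_eq_abs, aux_abs_sign_eq_one (hSx i hi), Real.one_rpow])]
        rw [Finset.sum_const, hScard, nsmul_eq_mul, mul_one]
      rw [hrhs] at h
      rw [← h, show (2 : ℝ) = ((2 : ℕ) : ℝ) by norm_num, Real.rpow_natCast]
    have hdist : dist d z = c / M * ‖w‖ := by
      rw [dist_eq_norm, hdz, norm_smul, Real.norm_eq_abs,
        abs_of_pos (by positivity : (0:ℝ) < c / M)]
    rw [hdist]
    have hsq : (c / M * ‖w‖) ^ 2 < δ ^ 2 := by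
      rw [mul_pow, hw2, div_pow]
      have heq : c ^ 2 / (M : ℝ) ^ 2 * M = c ^ 2 / M := by
        field_simp
      rw [heq, div_lt_iff₀ hMpos]
      have h3 := (div_lt_iff₀ (by positivity : (0:ℝ) < δ ^ 2)).mp hMgt
      linarith
    exact lt_of_pow_lt_pow_left₀ 2 hδ.le hsq

end

/-- in `ℓ²`, the quasi-relative interior of the `ℓ¹`-unit ball
`Ω = {x ∈ ℓ² | ‖x‖₁ ≤ 1}` is `Ω` minus the points of `ℓ¹`-norm one having only
finitely many nonzero coordinates. -/
theorem qri_of_l1_ball_in_l2 :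
    qri {x : lp (fun _ : ℕ => ℝ) 2 | ∑' k, (‖x k‖₊ : ℝ≥0∞) ≤ 1} =
      {x : lp (fun _ : ℕ => ℝ) 2 | ∑' k, (‖x k‖₊ : ℝ≥0∞) ≤ 1} \
        {x : lp (fun _ : ℕ => ℝ) 2 | (∑' k, (‖x k‖₊ : ℝ≥0∞)) = 1 ∧
          ∃ k₀ : ℕ, ∀ k ≥ k₀, x k = 0} := by
  ext x
  simp only [qri, Set.mem_setOf_eq, Set.mem_diff, Set.mem_sep_iff]
  constructor
  · rintro ⟨hxΩ, hlin⟩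
    refine ⟨hxΩ, ?_⟩
    rintro ⟨h1, k₀, hk⟩
    exact aux_not_qri x h1 k₀ hk hlin
  · rintro ⟨hxΩ, hbad⟩
    refine ⟨hxΩ, ⊤, ?_⟩
    rw [Submodule.top_coe]
    refine (Set.eq_univ_of_univ_subset ?_).symm
    intro d _
    have hdense := aux_dense d
    have hsub : {g : X2 | ∃ N : ℕ, ∀ k ≥ N, g k = 0} ⊆
        closure (coneGen ((fun y => y - x) ''
          {y : X2 | ∑' k, (‖y k‖₊ : ℝ≥0∞) ≤ 1})) := by
      rintro g ⟨N, hgN⟩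
      by_cases hone : ∑' k, (‖x k‖₊ : ℝ≥0∞) = 1
      · have hinf : ∀ n : ℕ, ∃ k, n ≤ k ∧ x k ≠ 0 := by
          by_contra h
          push_neg at h
          obtain ⟨n, hn⟩ := h
          exact hbad ⟨hone, n, fun k hk => hn k hk⟩
        exact aux_caseB x hone hinf g N hgN
      · exact subset_closure (aux_caseA x (lt_of_le_of_ne hxΩ hone) g N hgN)
    exact closure_minimal hsub isClosed_closure hdense
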